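/- Let V be a finite set with |V| = m, λ(1),...,λ(t) pairwise disjoint subsets with union λ of cardinality n, and L the simplicial complex of subsets of V containing no λ(k). Then every block lower-triangular matrix of the form [[M, 0], [N, Σ]] — where M ∈ GL(m−n, ℚ) acts on the span of V∖λ, N is arbitrary, and Σ is a permutation matrix permuting the elements of λ that preserves the partition {λ(1),...,λ(t)} up to permuting blocks of equal cardinality — induces a graded ℚ-algebra automorphism of the Stanley-Reisner ring ℚ[L]. -/

import Mathlib

open MvPolynomial

/-- Let `V` be a finite set with `|V| = m`, `λ 1, …, λ t` pairwise
disjoint subsets with union `Λ` of cardinality `n`, and `L` the complete intersection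
complex of subsets of `V` containing no `λ k`, so that
`ℚ[L] = ℚ[x_v : v ∈ V]/(v_{λ 1}, …, v_{λ t})`.  Every block lower-triangular matrix
`[[M, 0], [N, Σ]]` — `M ∈ GL(m − n, ℚ)` acting on the span of `V ∖ Λ`, `N` arbitrary, and
`Σ` a permutation of the elements of `Λ` carrying each block `λ k` onto a block `λ (ρ k)`
(necessarily of equal cardinality) — induces, by linear substitution on the degree-2
generators, a graded `ℚ`-algebra automorphism of `ℚ[L]`. -/
theorem stmt_11 (V : Type*) [Fintype V] [DecidableEq V]
    (t : ℕ) (lam : Fin t → Finset V)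
    (hdisj : ∀ k l, k ≠ l → Disjoint (lam k) (lam l))
    (Lam : Finset V) (hLam : ∀ v, v ∈ Lam ↔ ∃ k, v ∈ lam k)
    (I : Ideal (MvPolynomial V ℚ))
    (hI : I = Ideal.span (Set.range fun k => ∏ v ∈ lam k, (X v : MvPolynomial V ℚ)))
    -- the matrix `[[M, 0], [N, Σ]]`:
    -- `Σ` is a permutation of `Λ` permuting the blocks `λ k` (of equal cardinality)
    (π : Equiv.Perm V) (ρ : Equiv.Perm (Fin t))
    (hπ : ∀ k, (lam k).image π = lam (ρ k))
    -- the columns indexed by `V ∖ Λ`, with entries `M` in the rows of `V ∖ Λ` and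
    -- arbitrary entries `N` in the rows of `Λ`
    (A : V → V → ℚ)
    -- `M` is invertible
    (hM : IsUnit (Matrix.of fun w v : {x : V // x ∉ Lam} => A w.1 v.1))
    -- the substitution on the generators
    (g : V → MvPolynomial V ℚ)
    (hg : ∀ v, g v = if v ∈ Lam then X (π v) else ∑ w : V, A w v • X w) :
    ∃ e : (MvPolynomial V ℚ ⧸ I) ≃ₐ[ℚ] (MvPolynomial V ℚ ⧸ I),
      ∀ p : MvPolynomial V ℚ,
        e (Ideal.Quotient.mk I p) = Ideal.Quotient.mk I (aeval g p) := by
  classical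
  -- π preserves Lam
  have hπLam : ∀ v, v ∈ Lam → π v ∈ Lam := by
    intro v hv
    obtain ⟨k, hk⟩ := (hLam v).1 hv
    exact (hLam _).2 ⟨ρ k, (hπ k) ▸ Finset.mem_image_of_mem π hk⟩
  have hπLam' : ∀ v, π v ∈ Lam → v ∈ Lam := by
    intro v hv
    obtain ⟨k, hk⟩ := (hLam (π v)).1 hv
    have h1 : π v ∈ (lam (ρ.symm k)).image π := by
      rw [hπ]; simpa using hk
    obtain ⟨w, hw, hww⟩ := Finset.mem_image.1 h1
    have : w = v := π.injective hww
    exact (hLam v).2 ⟨ρ.symm k, this ▸ hw⟩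
  -- the full matrix B
  set B : Matrix V V ℚ :=
    Matrix.of (fun u v => if v ∈ Lam then (if u = π v then (1:ℚ) else 0) else A u v) with hB
  -- B is invertible
  have hBunit : IsUnit B := by
    set eS : {x : V // x ∈ Lam} ⊕ {x : V // x ∉ Lam} ≃ V := Equiv.sumCompl (· ∈ Lam) with heS
    set πL : Equiv.Perm {x : V // x ∈ Lam} :=
      π.subtypePerm (fun v => ⟨hπLam' v, hπLam v⟩) with hπL
    have hblocks : (Matrix.reindexAlgEquiv ℚ ℚ eS.symm) B =
        Matrix.fromBlocks (Equiv.Perm.permMatrix ℚ πL.symm)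
          (Matrix.of fun (u : {x : V // x ∈ Lam}) (v : {x : V // x ∉ Lam}) => A u.1 v.1)
          0 (Matrix.of fun w v : {x : V // x ∉ Lam} => A w.1 v.1) := by
      ext i j
      rcases i with i | i <;> rcases j with j | j <;>
        simp only [Matrix.reindexAlgEquiv_apply, Matrix.reindex_apply, Matrix.submatrix_apply,
          Equiv.symm_symm, heS, Equiv.sumCompl_apply_inl, Equiv.sumCompl_apply_inr,
          Matrix.fromBlocks_apply₁₁, Matrix.fromBlocks_apply₁₂, Matrix.fromBlocks_apply₂₁,
          Matrix.fromBlocks_apply₂₂, hB, Matrix.of_apply]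
      · simp only [j.2, if_true, Equiv.Perm.permMatrix, Equiv.toPEquiv_apply,
          PEquiv.toMatrix_apply, Option.mem_def, Option.some.injEq]
        have hiff : (πL.symm i = j) ↔ (i.1 = π j.1) := by
          rw [Equiv.symm_apply_eq, Subtype.ext_iff, hπL, Equiv.Perm.subtypePerm_apply]
        rw [if_congr hiff.symm rfl rfl]
      · simp [j.2]
      · simp only [j.2, if_true, Matrix.zero_apply]
        have : ¬ (i.1 = π j.1) := fun h => i.2 (h ▸ hπLam j.1 j.2)
        simp [this]
      · simp [j.2]
    have hfrom : IsUnit ((Matrix.reindexAlgEquiv ℚ ℚ eS.symm) B) := by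
      rw [hblocks]
      rw [Matrix.isUnit_fromBlocks_zero₂₁]
      refine ⟨?_, hM⟩
      rw [Matrix.isUnit_iff_isUnit_det, Matrix.det_permutation]
      rcases Int.units_eq_one_or (Equiv.Perm.sign πL.symm) with h | h <;> rw [h] <;> simp
    have := hfrom.map (Matrix.reindexAlgEquiv ℚ ℚ eS.symm).symm
    simpa using this
  have hdet : IsUnit B.det := (Matrix.isUnit_iff_isUnit_det B).1 hBunit
  have hBC : B * B⁻¹ = 1 := Matrix.mul_nonsing_inv B hdet
  have hCB : B⁻¹ * B = 1 := Matrix.nonsing_inv_mul B hdet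
  -- g as a uniform linear substitution
  have gform : ∀ v, g v = ∑ w : V, B w v • X w := by
    intro v
    rw [hg]
    by_cases hv : v ∈ Lam
    · simp only [hv, if_true, hB, Matrix.of_apply, ite_smul, one_smul, zero_smul]
      rw [Finset.sum_ite_eq' Finset.univ (π v) (fun w => (X w : MvPolynomial V ℚ))]
      simp
    · simp [hv, hB]
  -- composition of linear substitutions
  have comp : ∀ (P Q : Matrix V V ℚ) (v : V),
      aeval (R := ℚ) (fun u => ∑ w : V, P w u • (X w : MvPolynomial V ℚ)) (∑ w : V, Q w v • (X w : MvPolynomial V ℚ))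
        = ∑ u : V, (P * Q) u v • X u := by
    intro P Q v
    rw [map_sum]
    simp only [map_smul, aeval_X]
    simp only [Finset.smul_sum, smul_smul]
    rw [Finset.sum_comm]
    refine Finset.sum_congr rfl fun u _ => ?_
    rw [← Finset.sum_smul, Matrix.mul_apply]
    congr 1
    exact Finset.sum_congr rfl fun w _ => mul_comm _ _
  -- inverse substitution
  set h : V → MvPolynomial V ℚ := fun v => ∑ w : V, B⁻¹ w v • X w with hh
  have gfun : g = fun u => ∑ w : V, B w u • X w := funext gform
  have e1 : ∀ v, aeval g (h v) = X v := by
    intro v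
    rw [hh, gfun, comp B B⁻¹ v, hBC]
    simp only [Matrix.one_apply, ite_smul, one_smul, zero_smul]
    rw [Finset.sum_ite_eq' Finset.univ v (fun w => (X w : MvPolynomial V ℚ))]
    simp
  have e2 : ∀ v, aeval h (g v) = X v := by
    intro v
    rw [gform v, comp B⁻¹ B v, hCB]
    simp only [Matrix.one_apply, ite_smul, one_smul, zero_smul]
    rw [Finset.sum_ite_eq' Finset.univ v (fun w => (X w : MvPolynomial V ℚ))]
    simp
  -- the automorphism of the polynomial ring
  set σ : MvPolynomial V ℚ ≃ₐ[ℚ] MvPolynomial V ℚ :=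
    AlgEquiv.ofAlgHom (aeval g) (aeval h)
      (by apply MvPolynomial.algHom_ext; intro v
          simp only [AlgHom.comp_apply, aeval_X, AlgHom.id_apply]
          exact e1 v)
      (by apply MvPolynomial.algHom_ext; intro v
          simp only [AlgHom.comp_apply, aeval_X, AlgHom.id_apply]
          exact e2 v) with hσ
  have hσapp : ∀ p, σ p = aeval g p := fun p => rfl
  -- σ permutes the generators
  have hgen : ∀ k, aeval g (∏ v ∈ lam k, (X v : MvPolynomial V ℚ))
      = ∏ v ∈ lam (ρ k), (X v : MvPolynomial V ℚ) := by
    intro k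
    rw [map_prod]
    have : ∀ v ∈ lam k, aeval g (X v : MvPolynomial V ℚ) = X (π v) := by
      intro v hv
      rw [aeval_X, hg, if_pos ((hLam v).2 ⟨k, hv⟩)]
    rw [Finset.prod_congr rfl this, ← hπ k,
      Finset.prod_image (fun a _ b _ hab => π.injective hab)]
  -- σ maps I onto I
  have hmap : I.map (σ : MvPolynomial V ℚ →+* MvPolynomial V ℚ) = I := by
    rw [hI, Ideal.map_span, ← Set.range_comp]
    congr 1
    have : ((σ : MvPolynomial V ℚ →+* MvPolynomial V ℚ) ∘
        fun k => ∏ v ∈ lam k, (X v : MvPolynomial V ℚ))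
        = (fun k => ∏ v ∈ lam k, (X v : MvPolynomial V ℚ)) ∘ ρ := by
      funext k
      simp only [Function.comp_apply]
      rw [show ((σ : MvPolynomial V ℚ →+* MvPolynomial V ℚ)
        (∏ v ∈ lam k, (X v : MvPolynomial V ℚ))) = σ (∏ v ∈ lam k, X v) from rfl,
        hσapp, hgen]
    rw [this, Function.Surjective.range_comp ρ.surjective]
  refine ⟨Ideal.quotientEquivAlg I I σ hmap.symm, fun p => ?_⟩
  rw [show (Ideal.quotientEquivAlg I I σ hmap.symm) (Ideal.Quotient.mk I p)
    = Ideal.Quotient.mk I (σ p) from rfl, hσapp]
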